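/- arXiv:1204.6248 — 2 statements merged into one kernel-verified Lean document; each statement's English description precedes it below -/
import Mathlib

section
/- For every integer x ≥ 1, P(2x−1, 2x−1) = Σ_{j=0}^{x−1} ((2j−1)!! · (x−1)! · (2x−1)!! · (2x−2j−1) · (2x−2)!) / ((4x−3)!! · j! · (x−j−1)! · (2x−2j−1)!! · (2j)!), as an identity in ℚ. -/
/-- `P I S` is the probability that a fixed clean mobile gets infected in the
Bluetooth malware model with `I` infected and `S` clean mobiles. -/
def P : ℕ → ℕ → ℚ
  | 0, _ => 0
  | _ + 1, 0 => 0
  | I + 1, S + 1 =>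
      1 / ((I : ℚ) + S + 1) + ((S : ℚ) / ((I : ℚ) + S + 1)) * P I S +
        ((I : ℚ) / ((I : ℚ) + S + 1)) * P (I - 1) (S + 1)
  termination_by I _ => I

/-- Double factorial `n‼`; with natural subtraction as argument this also
implements the convention `(-1)‼ = 0‼ = 1`. -/
def dfact : ℕ → ℕ
  | 0 => 1
  | 1 => 1
  | n + 2 => (n + 2) * dfact n

open Polynomial Finset in
lemma key_trinomial (n : ℕ) :
    ∑ j ∈ Finset.range (n+1), n.choose j * (n-j).choose j * 2^(n-2*j) = (2*n).choose n := by
  have h2 : ((X + 1 : Polynomial ℕ)) ^ (2*n) = (X*(X + C 2) + 1)^n := by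
    rw [pow_mul]
    congr 1
    have h : (C 2 : Polynomial ℕ) = 2 := by simp
    rw [h]; ring
  have h1 : ∑ b ∈ Finset.range (n+1),
      (((X*(X + C 2) : Polynomial ℕ))^b * ((n.choose b : ℕ) : Polynomial ℕ)).coeff n
        = (2*n).choose n := by
    rw [← finset_sum_coeff]
    have := coeff_X_add_one_pow ℕ (2*n) n
    rw [h2, add_pow] at this
    simpa using this
  have h3 : ∀ b, b ≤ n →
      (((X*(X + C 2) : Polynomial ℕ))^b * ((n.choose b : ℕ) : Polynomial ℕ)).coeff n
        = 2^(b-(n-b)) * b.choose (n-b) * n.choose b := by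
    intro b hb
    rw [mul_pow, ← C_eq_natCast, coeff_mul_C, mul_assoc]
    have hc : ((X:Polynomial ℕ)^b * (X + C 2)^b).coeff n
        = ((X + C 2 : Polynomial ℕ)^b).coeff (n-b) := by
      conv_lhs => rw [show n = (n-b)+b by omega]
      rw [coeff_X_pow_mul]
    rw [hc, coeff_X_add_C_pow]
    push_cast
    ring
  have h1' : ∑ b ∈ Finset.range (n+1), 2^(b-(n-b)) * b.choose (n-b) * n.choose b
      = (2*n).choose n := by
    rw [← h1]
    exact Finset.sum_congr rfl fun b hb => (h3 b (by simpa [Nat.lt_succ_iff] using hb)).symm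
  rw [← h1']
  conv_lhs => rw [← Finset.sum_range_reflect]
  refine Finset.sum_congr rfl fun j hj => ?_
  have hj' : j ≤ n := by simpa [Nat.lt_succ_iff] using hj
  have e1 : n + 1 - 1 - j = n - j := by omega
  rw [e1, show n - (n-j) = j by omega, Nat.choose_symm hj',
    show n - 2*(n-j) = j - (n-j) by omega]
  ring

lemma Pval (i : ℕ) : ∀ s : ℕ, i ≤ s → P i s = (i : ℚ) / ((i : ℚ) + s - 1) := by
  induction i using Nat.strong_induction_on with
  | _ i ih =>
    match i with
    | 0 => intro s _; simp [P]
    | 1 =>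
      intro s hs
      match s, hs with
      | (t+1), _ =>
        show P (0+1) (t+1) = _
        rw [P]
        simp [P]
    | (I+2) =>
      intro s hs
      match s, hs with
      | (S+1), hs =>
        have hIS : I + 1 ≤ S := by omega
        show P ((I+1)+1) (S+1) = _
        rw [P]
        have e1 : I + 1 - 1 = I := rfl
        rw [e1]
        rw [ih (I+1) (by omega) S (by omega), ih I (by omega) (S+1) (by omega)]
        have hS1 : (1:ℚ) ≤ (S:ℚ) := by exact_mod_cast hIS.trans' (by omega)
        push_cast
        have hA : ((I:ℚ) + S) ≠ 0 := by positivity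
        have hB : (2 + (I:ℚ) + S) ≠ 0 := by positivity
        have hB' : ((I:ℚ) + S + 2) ≠ 0 := by positivity
        have hC : ((I:ℚ) + 1 + S + 1) ≠ 0 := by positivity
        have h1 : ((I:ℚ) + 1 + S - 1) = (I:ℚ) + S := by ring
        have h2 : ((I:ℚ) + (S + 1) - 1) = (I:ℚ) + S := by ring
        have h3 : ((I:ℚ) + 2 + (S+1) - 1) = (I:ℚ) + S + 2 := by ring
        rw [h1, h2, h3]
        field_simp
        ring

open Nat in
lemma dfact_odd (k : ℕ) : dfact (2*k+1) * (2^k * k !) = (2*k+1)! := by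
  induction k with
  | zero => rfl
  | succ k ih =>
    calc dfact (2*(k+1)+1) * (2^(k+1) * (k+1)!)
        = (2*k+3) * ((k+1) * 2) * (dfact (2*k+1) * (2^k * k !)) := by
          rw [show 2*(k+1)+1 = (2*k+1)+2 by ring, dfact, pow_succ, Nat.factorial_succ]; ring
      _ = (2*k+3) * ((k+1) * 2) * (2*k+1)! := by rw [ih]
      _ = (2*(k+1)+1)! := by
          have fs : ∀ a b : ℕ, a = b + 1 → a ! = a * b ! := fun a b h => by
            rw [h, Nat.factorial_succ]
          rw [fs (2*(k+1)+1) (2*k+2) (by ring), fs (2*k+2) (2*k+1) (by ring)]; ring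

open Nat in
lemma dfact_even (j : ℕ) : dfact (2*j-1) * (2^j * j !) = (2*j)! := by
  cases j with
  | zero => rfl
  | succ k =>
    calc dfact (2*(k+1)-1) * (2^(k+1) * (k+1)!)
        = (k+1) * 2 * (dfact (2*k+1) * (2^k * k !)) := by
          rw [show 2*(k+1)-1 = 2*k+1 by omega, pow_succ, Nat.factorial_succ]; ring
      _ = (k+1) * 2 * (2*k+1)! := by rw [dfact_odd]
      _ = (2*(k+1))! := by
          have fs : ∀ a b : ℕ, a = b + 1 → a ! = a * b ! := fun a b h => by
            rw [h, Nat.factorial_succ]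
          rw [fs (2*(k+1)) (2*k+1) (by ring)]; ring

open Nat in
lemma dfact_odd_q (k : ℕ) : (dfact (2*k+1) : ℚ) = ((2*k+1)! : ℚ) / (2^k * (k ! : ℚ)) := by
  have h2 : ((2:ℚ)^k * (k ! : ℚ)) ≠ 0 := by positivity
  field_simp
  have hh := dfact_odd k
  rw [← mul_assoc] at hh
  exact_mod_cast hh

open Nat in
lemma dfact_even_q (j : ℕ) : (dfact (2*j-1) : ℚ) = ((2*j)! : ℚ) / (2^j * (j ! : ℚ)) := by
  have h2 : ((2:ℚ)^j * (j ! : ℚ)) ≠ 0 := by positivity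
  field_simp
  have hh := dfact_even j
  rw [← mul_assoc] at hh
  exact_mod_cast hh

open Nat in
/-- Closed form for `P (2x-1) (2x-1)`. -/
theorem stmt_3 (x : ℕ) (hx : 1 ≤ x) :
    P (2 * x - 1) (2 * x - 1) =
      ∑ j ∈ Finset.range x,
        ((dfact (2 * j - 1) : ℚ) * ((x - 1) ! : ℚ) * (dfact (2 * x - 1) : ℚ) *
            ((2 * x - 2 * j - 1 : ℕ) : ℚ) * ((2 * x - 2) ! : ℚ)) /
          ((dfact (4 * x - 3) : ℚ) * (j ! : ℚ) * ((x - j - 1) ! : ℚ) *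
            (dfact (2 * x - 2 * j - 1) : ℚ) * ((2 * j) ! : ℚ)) := by
  obtain ⟨m, rfl⟩ : ∃ m, x = m + 1 := ⟨x - 1, by omega⟩
  have hsum : ∑ j ∈ Finset.range (m+1),
      (2*m).choose j * (2*m-j).choose j * 2^(2*m-2*j) = (4*m).choose (2*m) := by
    have h := key_trinomial (2*m)
    rw [show 2*(2*m) = 4*m by ring] at h
    rw [← h]
    apply Finset.sum_subset
    · exact Finset.range_subset_range.mpr (by omega)
    · intro j hj hj2
      simp only [Finset.mem_range] at hj hj2
      have hlt : 2*m - j < j := by omega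
      rw [Nat.choose_eq_zero_of_lt hlt]
      ring
  have hterm : ∀ j ∈ Finset.range (m+1),
      ((dfact (2 * j - 1) : ℚ) * (((m+1) - 1) ! : ℚ) * (dfact (2 * (m+1) - 1) : ℚ) *
            ((2 * (m+1) - 2 * j - 1 : ℕ) : ℚ) * ((2 * (m+1) - 2) ! : ℚ)) /
          ((dfact (4 * (m+1) - 3) : ℚ) * (j ! : ℚ) * (((m+1) - j - 1) ! : ℚ) *
            (dfact (2 * (m+1) - 2 * j - 1) : ℚ) * ((2 * j) ! : ℚ))
        = ((2*m+1 : ℚ)/(4*m+1)) *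
            (((2*m).choose j * (2*m-j).choose j * 2^(2*m-2*j) : ℕ) : ℚ) /
              (((4*m).choose (2*m) : ℕ) : ℚ) := by
    intro j hj
    have hjm : j ≤ m := by simpa [Nat.lt_succ_iff] using hj
    obtain ⟨k, rfl⟩ : ∃ k, m = j + k := ⟨m - j, by omega⟩
    rw [show (2 * (j+k+1) - 1) = 2*(j+k)+1 by omega,
        show (2 * (j+k+1) - 2*j - 1 : ℕ) = 2*k+1 by omega,
        show (2 * (j+k+1) - 2 : ℕ) = 2*(j+k) by omega,
        show (4 * (j+k+1) - 3) = 2*(2*(j+k))+1 by omega,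
        show ((j+k+1) - 1) = j+k by omega,
        show ((j+k+1) - j - 1) = k by omega,
        show (2*(j+k) - j) = j + 2*k by omega,
        show (2*(j+k) - 2*j) = 2*k by omega]
    rw [dfact_even_q j, dfact_odd_q (j+k), dfact_odd_q k, dfact_odd_q (2*(j+k))]
    rw [Nat.cast_mul, Nat.cast_mul,
        Nat.cast_choose ℚ (show j ≤ 2*(j+k) by omega),
        Nat.cast_choose ℚ (show j ≤ j + 2*k by omega),
        Nat.cast_choose ℚ (show 2*(j+k) ≤ 4*(j+k) by omega)]
    rw [show (2*(j+k) - j) = j + 2*k by omega,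
        show (j + 2*k - j) = 2*k by omega,
        show (4*(j+k) - 2*(j+k)) = 2*(j+k) by omega]
    have q1 : ((2*(j+k)+1)! : ℚ) = (2*(j+k)+1) * ((2*(j+k))! : ℚ) := by
      exact_mod_cast congrArg (Nat.cast (R := ℚ)) (Nat.factorial_succ (2*(j+k)))
    have q2 : ((2*k+1)! : ℚ) = (2*k+1) * ((2*k)! : ℚ) := by
      exact_mod_cast congrArg (Nat.cast (R := ℚ)) (Nat.factorial_succ (2*k))
    have q3 : ((2*(2*(j+k))+1)! : ℚ) = (4*(j+k)+1) * ((4*(j+k))! : ℚ) := by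
      rw [show 2*(2*(j+k))+1 = 4*(j+k)+1 by ring]
      exact_mod_cast Nat.factorial_succ (4*(j+k))
    rw [q1, q2, q3]
    push_cast
    have n1 : ((j ! : ℚ)) ≠ 0 := by positivity
    have n2 : ((k ! : ℚ)) ≠ 0 := by positivity
    have n3 : (((j+k) ! : ℚ)) ≠ 0 := by positivity
    have n4 : (((2*j) ! : ℚ)) ≠ 0 := by positivity
    have n5 : (((2*k) ! : ℚ)) ≠ 0 := by positivity
    have n6 : (((2*(j+k)) ! : ℚ)) ≠ 0 := by positivity
    have n7 : (((j+2*k) ! : ℚ)) ≠ 0 := by positivity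
    have n8 : (((4*(j+k)) ! : ℚ)) ≠ 0 := by positivity
    have n9 : (4*((j:ℚ)+k)+1) ≠ 0 := by positivity
    have n10 : (2*((j:ℚ)+k)+1) ≠ 0 := by positivity
    have n11 : (2*(k:ℚ)+1) ≠ 0 := by positivity
    field_simp
    ring
  rw [Finset.sum_congr rfl hterm]
  rw [show 2*(m+1)-1 = 2*m+1 by omega]
  rw [Pval (2*m+1) (2*m+1) le_rfl]
  have hD : (((4*m).choose (2*m) : ℕ) : ℚ) ≠ 0 := by
    exact_mod_cast (Nat.choose_pos (show 2*m ≤ 4*m by omega)).ne'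
  rw [← Finset.sum_div, ← Finset.mul_sum, ← Nat.cast_sum, hsum]
  rw [mul_div_assoc, div_self hD, mul_one]
  push_cast
  have : ((2:ℚ)*m+1 + (2*m+1) - 1) = 4*m+1 := by ring
  rw [this]
end

section
/- For every integer x ≥ 1, P(2x−2, 2x) = Σ_{j=0}^{x−1} ((2j+1)!! · (x−1)! · (2x−3)!! · (2x−2j−2) · (2x−1)!) / ((4x−3)!! · j! · (x−j−1)! · (2x−2j−3)!! · (2j+2)!), as an identity in ℚ. -/
open Nat

lemma P_succ (I S : ℕ) : P (I+1) (S+1) = 1 / ((I : ℚ) + S + 1) + ((S : ℚ) / ((I : ℚ) + S + 1)) * P I S +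
        ((I : ℚ) / ((I : ℚ) + S + 1)) * P (I - 1) (S + 1) := by rw [P]

lemma Pval_s4 : ∀ I k : ℕ, P I (I + 2*k + 2) = (I:ℚ) / (2*I + 2*k + 1) := by
  intro I
  induction I using Nat.strong_induction_on with
  | _ I ih =>
    match I with
    | 0 => intro k; simp [P]
    | 1 =>
      intro k
      rw [show 1 + 2*k + 2 = (2*k+2)+1 by omega, show (1:ℕ) = 0+1 from rfl, P_succ]
      simp [P]
      push_cast
      ring
    | (I+2) =>
      intro k
      rw [show I+2+2*k+2 = (I+2*k+3)+1 by omega, show I+2 = (I+1)+1 from rfl, P_succ]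
      have h1 : P (I+1) (I+2*k+3) = ((I:ℚ)+1) / (2*(I+1) + 2*k + 1) := by
        have := ih (I+1) (by omega) k
        rw [show (I+1) + 2*k + 2 = I+2*k+3 by omega] at this
        rw [this]; push_cast; ring_nf
      have h2 : P ((I+1)-1) ((I+2*k+3)+1) = (I:ℚ) / (2*I + 2*k + 3) := by
        have := ih I (by omega) (k+1)
        rw [show I + 2*(k+1) + 2 = I+2*k+3+1 by omega] at this
        rw [show (I+1)-1 = I by omega, this]; push_cast; ring_nf
      rw [h1, h2]
      have hc1 : (2*(I:ℚ) + 2*k + 5) ≠ 0 := by positivity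
      have hc2 : (2*(I:ℚ) + 2*k + 3) ≠ 0 := by positivity
      push_cast
      field_simp
      ring

lemma dfact_pos (n : ℕ) : 0 < dfact n := by
  induction n using dfact.induct <;> simp [dfact] <;> positivity
lemma dfact_add_two (n : ℕ) : dfact (n+2) = (n+2) * dfact n := rfl

noncomputable def t (n j : ℕ) : ℚ :=
  ((dfact (2*j+1) : ℚ) * (n ! : ℚ) * (dfact (2*n-1) : ℚ) * ((2*n-2*j : ℕ) : ℚ) * ((2*n+1)! : ℚ)) /
    ((dfact (4*n+1) : ℚ) * (j ! : ℚ) * ((n-j)! : ℚ) * (dfact (2*n-2*j-1) : ℚ) * ((2*j+2)! : ℚ))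

noncomputable def g (n j : ℕ) : ℚ :=
  (4*(j:ℚ)*((j:ℚ)+1) * ((8*(n:ℚ)+6)*(j:ℚ) - (12*(n:ℚ)^2+14*(n:ℚ)+3)) * (dfact (2*j+1) : ℚ) *
      (n ! : ℚ) * (dfact (2*n-1) : ℚ) * ((2*n+1)! : ℚ)) /
    ((2*(n:ℚ))*(4*(n:ℚ)+3) * (dfact (4*n+1) : ℚ) * (j ! : ℚ) * ((n-j)! : ℚ) *
      (dfact (2*n-2*j+1) : ℚ) * ((2*j+2)! : ℚ))

set_option maxHeartbeats 3000000 in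
lemma tele (n j : ℕ) (h : j < n) :
    (4*(n:ℚ)+5)/(2*(n:ℚ)+2) * t (n+1) j - (4*(n:ℚ)+1)/(2*(n:ℚ)) * t n j
      = g n (j+1) - g n j := by
  obtain ⟨m, rfl⟩ : ∃ m, n = j+m+1 := ⟨n-j-1, by omega⟩
  simp only [t, g]
  rw [show 2*(j+m+1+1)-2*j-1 = 2*m+3 by omega,
      show 2*(j+m+1+1)-1 = 2*j+2*m+3 by omega,
      show 2*(j+m+1+1)-2*j = 2*m+4 by omega,
      show (j+m+1+1)-j = m+2 by omega,
      show 4*(j+m+1+1)+1 = 4*j+4*m+9 by omega,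
      show 2*(j+m+1+1)+1 = 2*j+2*m+5 by omega,
      show 2*(j+m+1)-2*j-1 = 2*m+1 by omega,
      show 2*(j+m+1)-2*(j+1)+1 = 2*m+1 by omega,
      show 2*(j+m+1)-2*j+1 = 2*m+3 by omega,
      show 2*(j+m+1)-1 = 2*j+2*m+1 by omega,
      show 2*(j+m+1)-2*j = 2*m+2 by omega,
      show (j+m+1)-(j+1) = m by omega,
      show (j+m+1)-j = m+1 by omega,
      show 4*(j+m+1)+1 = 4*j+4*m+5 by omega,
      show 2*(j+m+1)+1 = 2*j+2*m+3 by omega,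
      show 2*(j+1)+1 = 2*j+3 by omega,
      show 2*(j+1)+2 = 2*j+4 by omega]
  rw [show (j+m+1+1)! = (j+m+2)*(j+m+1)! by rw [show j+m+1+1 = (j+m+1)+1 by omega, Nat.factorial_succ],
      show (2*j+2*m+5)! = (2*j+2*m+5)*((2*j+2*m+4)*(2*j+2*m+3)!) by
        rw [show 2*j+2*m+5 = (2*j+2*m+4)+1 by omega]; rw [Nat.factorial_succ]
        rw [show 2*j+2*m+4 = (2*j+2*m+3)+1 by omega]; rw [Nat.factorial_succ],
      show dfact (4*j+4*m+9) = (4*j+4*m+9)*((4*j+4*m+7)*dfact (4*j+4*m+5)) by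
        rw [show 4*j+4*m+9 = (4*j+4*m+7)+2 by omega, dfact_add_two,
            show 4*j+4*m+7 = (4*j+4*m+5)+2 by omega, dfact_add_two],
      show dfact (2*j+2*m+3) = (2*j+2*m+3)*dfact (2*j+2*m+1) by
        rw [show 2*j+2*m+3 = (2*j+2*m+1)+2 by omega, dfact_add_two],
      show dfact (2*m+3) = (2*m+3)*dfact (2*m+1) by
        rw [show 2*m+3 = (2*m+1)+2 by omega, dfact_add_two],
      show (m+2)! = (m+2)*((m+1)*(m !)) by
        rw [show m+2 = (m+1)+1 by omega, Nat.factorial_succ, Nat.factorial_succ],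
      show (m+1)! = (m+1)*(m !) from Nat.factorial_succ m,
      show dfact (2*j+3) = (2*j+3)*dfact (2*j+1) by
        rw [show 2*j+3 = (2*j+1)+2 by omega, dfact_add_two],
      show (j+1)! = (j+1)*(j !) from Nat.factorial_succ j,
      show (2*j+4)! = (2*j+4)*((2*j+3)*(2*j+2)!) by
        rw [show 2*j+4 = (2*j+3)+1 by omega, Nat.factorial_succ,
            show 2*j+3 = (2*j+2)+1 by omega, Nat.factorial_succ]]
  have A1 : (dfact (2*j+1) : ℚ) ≠ 0 := Nat.cast_ne_zero.mpr (dfact_pos _).ne'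
  have A2 : ((j ! : ℕ) : ℚ) ≠ 0 := Nat.cast_ne_zero.mpr (Nat.factorial_pos _).ne'
  have A3 : (((2*j+2)! : ℕ) : ℚ) ≠ 0 := Nat.cast_ne_zero.mpr (Nat.factorial_pos _).ne'
  have A4 : (dfact (2*m+1) : ℚ) ≠ 0 := Nat.cast_ne_zero.mpr (dfact_pos _).ne'
  have A5 : ((m ! : ℕ) : ℚ) ≠ 0 := Nat.cast_ne_zero.mpr (Nat.factorial_pos _).ne'
  have A6 : (((j+m+1)! : ℕ) : ℚ) ≠ 0 := Nat.cast_ne_zero.mpr (Nat.factorial_pos _).ne'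
  have A7 : (dfact (2*j+2*m+1) : ℚ) ≠ 0 := Nat.cast_ne_zero.mpr (dfact_pos _).ne'
  have A8 : (((2*j+2*m+3)! : ℕ) : ℚ) ≠ 0 := Nat.cast_ne_zero.mpr (Nat.factorial_pos _).ne'
  have A9 : (dfact (4*j+4*m+5) : ℚ) ≠ 0 := Nat.cast_ne_zero.mpr (dfact_pos _).ne'
  push_cast
  have B1 : ((j:ℚ)+(m:ℚ)+1) ≠ 0 := by positivity
  have B2 : ((j:ℚ)+(m:ℚ)+2) ≠ 0 := by positivity
  have B3 : (2*(j:ℚ)+2*(m:ℚ)+3) ≠ 0 := by positivity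
  have B4 : (2*(j:ℚ)+2*(m:ℚ)+4) ≠ 0 := by positivity
  have B5 : (2*(j:ℚ)+2*(m:ℚ)+5) ≠ 0 := by positivity
  have B6 : (4*(j:ℚ)+4*(m:ℚ)+5) ≠ 0 := by positivity
  have B7 : (4*(j:ℚ)+4*(m:ℚ)+7) ≠ 0 := by positivity
  have B8 : (4*(j:ℚ)+4*(m:ℚ)+9) ≠ 0 := by positivity
  have C1 : ((m:ℚ)+1) ≠ 0 := by positivity
  have C2 : ((m:ℚ)+2) ≠ 0 := by positivity
  have C3 : (2*(m:ℚ)+3) ≠ 0 := by positivity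
  have C4 : ((j:ℚ)+1) ≠ 0 := by positivity
  have C5 : (2*(j:ℚ)+3) ≠ 0 := by positivity
  have C6 : (2*(j:ℚ)+4) ≠ 0 := by positivity
  have C7 : (4*(j:ℚ)+4*(m:ℚ)+3+4) ≠ 0 := by positivity
  field_simp
  ring

lemma t_self (n : ℕ) : t n n = 0 := by
  simp [t]

lemma g_zero (n : ℕ) : g n 0 = 0 := by
  simp [g]

set_option maxHeartbeats 1000000 in
lemma bound (m : ℕ) :
    t (m+2) (m+1) + (2*((m:ℚ)+1)+2)/(4*((m:ℚ)+1)+5) * g (m+1) (m+1) = 0 := by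
  simp only [t, g]
  rw [show 2*(m+2)-2*(m+1)-1 = 1 by omega,
      show 2*(m+2)-2*(m+1) = 2 by omega,
      show 2*(m+2)-1 = 2*m+3 by omega,
      show (m+2)-(m+1) = 1 by omega,
      show 4*(m+2)+1 = 4*m+9 by omega,
      show 2*(m+2)+1 = 2*m+5 by omega,
      show 2*(m+1)+1 = 2*m+3 by omega,
      show 2*(m+1)-2*(m+1)+1 = 1 by omega,
      show 2*(m+1)-1 = 2*m+1 by omega,
      show 4*(m+1)+1 = 4*m+5 by omega,
      show (m+1)-(m+1) = 0 by omega,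
      show 2*(m+1)+2 = 2*m+4 by omega]
  rw [show dfact (2*m+3) = (2*m+3)*dfact (2*m+1) by
        rw [show 2*m+3 = (2*m+1)+2 by omega, dfact_add_two],
      show dfact (4*m+9) = (4*m+9)*((4*m+7)*dfact (4*m+5)) by
        rw [show 4*m+9 = (4*m+7)+2 by omega, dfact_add_two,
            show 4*m+7 = (4*m+5)+2 by omega, dfact_add_two],
      show (2*m+5)! = (2*m+5)*((2*m+4)*(2*m+3)!) by
        rw [show 2*m+5 = (2*m+4)+1 by omega, Nat.factorial_succ,
            show 2*m+4 = (2*m+3)+1 by omega, Nat.factorial_succ],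
      show (2*m+4)! = (2*m+4)*(2*m+3)! by
        rw [show 2*m+4 = (2*m+3)+1 by omega, Nat.factorial_succ],
      show (m+2)! = (m+2)*(m+1)! by
        rw [show m+2 = (m+1)+1 by omega, Nat.factorial_succ]]
  simp only [show dfact 1 = 1 from rfl, Nat.factorial_zero, Nat.cast_one, mul_one, one_mul]
  have A1 : (dfact (2*m+1) : ℚ) ≠ 0 := Nat.cast_ne_zero.mpr (dfact_pos _).ne'
  have A2 : (((m+1)! : ℕ) : ℚ) ≠ 0 := Nat.cast_ne_zero.mpr (Nat.factorial_pos _).ne'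
  have A3 : (((2*m+3)! : ℕ) : ℚ) ≠ 0 := Nat.cast_ne_zero.mpr (Nat.factorial_pos _).ne'
  have A4 : (dfact (4*m+5) : ℚ) ≠ 0 := Nat.cast_ne_zero.mpr (dfact_pos _).ne'
  push_cast
  have B1 : ((m:ℚ)+1) ≠ 0 := by positivity
  have B2 : ((m:ℚ)+2) ≠ 0 := by positivity
  have B3 : (2*(m:ℚ)+3) ≠ 0 := by positivity
  have B4 : (2*(m:ℚ)+4) ≠ 0 := by positivity
  have B5 : (2*(m:ℚ)+5) ≠ 0 := by positivity
  have B6 : (4*(m:ℚ)+5) ≠ 0 := by positivity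
  have B7 : (4*(m:ℚ)+7) ≠ 0 := by positivity
  have B8 : (4*(m:ℚ)+9) ≠ 0 := by positivity
  have B9 : (4*((m:ℚ)+1)+3) ≠ 0 := by positivity
  field_simp
  ring

lemma key : ∀ n : ℕ, ∑ j ∈ Finset.range (n+1), t n j = (2*(n:ℚ))/(4*(n:ℚ)+1) := by
  intro n
  induction n with
  | zero => norm_num [t]
  | succ n ih =>
    match n, ih with
    | 0, _ =>
      norm_num [Finset.sum_range_succ, t, Nat.factorial,
        show dfact 1 = 1 from rfl, show dfact 5 = 15 from rfl, show dfact 0 = 1 from rfl]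
    | (n+1), ih =>
      set N := n+1 with hN
      have hB : ∑ j ∈ Finset.range N, t N j = 2*(N:ℚ)/(4*(N:ℚ)+1) := by
        rw [Finset.sum_range_succ, t_self, add_zero] at ih; exact ih
      have hE : ∑ j ∈ Finset.range N,
          ((4*(N:ℚ)+5)/(2*(N:ℚ)+2) * t (N+1) j - (4*(N:ℚ)+1)/(2*(N:ℚ)) * t N j) = g N N - g N 0 := by
        rw [← Finset.sum_range_sub (g N) N]
        exact Finset.sum_congr rfl (fun j hj => tele N j (Finset.mem_range.mp hj))
      rw [g_zero, sub_zero, Finset.sum_sub_distrib, ← Finset.mul_sum, ← Finset.mul_sum, hB] at hE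
      have hT : t (N+1) N + (2*(N:ℚ)+2)/(4*(N:ℚ)+5) * g N N = 0 := by
        have hb := bound n
        rw [show n+2 = N+1 from rfl, show n+1 = N from rfl] at hb
        push_cast at hb ⊢
        convert hb using 3 <;> push_cast <;> simp only [hN] <;> push_cast <;> ring
      have hT' : t (N+1) N = -((2*(N:ℚ)+2)/(4*(N:ℚ)+5) * g N N) := by linarith
      rw [← hE] at hT'
      rw [show N+1+1 = (N+1)+1 from rfl, Finset.sum_range_succ, Finset.sum_range_succ, t_self, add_zero,
          hT']
      have h1 : (2*(N:ℚ)) ≠ 0 := by positivity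
      have h2 : (4*(N:ℚ)+1) ≠ 0 := by positivity
      have h3 : (2*(N:ℚ)+2) ≠ 0 := by positivity
      have h4 : (4*(N:ℚ)+5) ≠ 0 := by positivity
      have h0 : (N:ℚ) ≠ 0 := by positivity
      push_cast
      field_simp
      ring

open Nat in
/-- Closed form for `P (2x-2) (2x)`. -/
theorem stmt_4 (x : ℕ) (hx : 1 ≤ x) :
    P (2 * x - 2) (2 * x) =
      ∑ j ∈ Finset.range x,
        ((dfact (2 * j + 1) : ℚ) * ((x - 1) ! : ℚ) * (dfact (2 * x - 3) : ℚ) *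
            ((2 * x - 2 * j - 2 : ℕ) : ℚ) * ((2 * x - 1) ! : ℚ)) /
          ((dfact (4 * x - 3) : ℚ) * (j ! : ℚ) * ((x - j - 1) ! : ℚ) *
            (dfact (2 * x - 2 * j - 3) : ℚ) * ((2 * j + 2) ! : ℚ)) := by
  obtain ⟨n, rfl⟩ : ∃ n, x = n+1 := ⟨x-1, by omega⟩
  have hL : P (2*(n+1)-2) (2*(n+1)) = (2*(n:ℚ))/(4*(n:ℚ)+1) := by
    rw [show 2*(n+1)-2 = 2*n by omega, show 2*(n+1) = 2*n + 2*0 + 2 by omega, Pval_s4 (2*n) 0]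
    push_cast
    norm_num
    ring_nf
  rw [hL, ← key n]
  apply Finset.sum_congr rfl
  intro j hj
  simp only [t]
  rw [show 2*(n+1)-3 = 2*n-1 by omega,
      show (n+1)-1 = n by omega,
      show 2*(n+1)-2*j-2 = 2*n-2*j by omega,
      show 2*(n+1)-1 = 2*n+1 by omega,
      show 4*(n+1)-3 = 4*n+1 by omega,
      show (n+1)-j-1 = n-j by omega,
      show 2*(n+1)-2*j-3 = 2*n-2*j-1 by omega]
end
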